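/- Let T be a triangle-free graph on m vertices with no stable set of size greater than s, and let G be obtained from T by substituting a copy of the complement T^c for every vertex of T. Then G has m^2 vertices and no clique or stable set of size greater than 2s. -/

import Mathlib

open SimpleGraph

/-- The graph obtained from `T` by substituting a copy of `Tᶜ` for every vertex of `T`:
`(u,a)` and `(v,b)` are adjacent iff `u = v` and `a,b` are nonadjacent (and distinct)
in `T`, or `u ≠ v` and `u,v` are adjacent in `T`. -/
def substComplAll {V : Type*} (T : SimpleGraph V) : SimpleGraph (V × V) where
  Adj p q := (p.1 = q.1 ∧ p.2 ≠ q.2 ∧ ¬ T.Adj p.2 q.2) ∨ (p.1 ≠ q.1 ∧ T.Adj p.1 q.1)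
  symm := ⟨by
    rintro p q (⟨h1, h2, h3⟩ | ⟨h1, h2⟩)
    · exact Or.inl ⟨h1.symm, h2.symm, fun h => h3 h.symm⟩
    · exact Or.inr ⟨h1.symm, h2.symm⟩⟩
  loopless := ⟨by rintro p (⟨_, h, _⟩ | ⟨h, _⟩) <;> exact h rfl⟩

lemma clique_card_le_two_of_triangleFree {V : Type*} {T : SimpleGraph V}
    (h : T.CliqueFree 3) {t : Finset V} (ht : T.IsClique (↑t : Set V)) :
    t.card ≤ 2 := by
  by_contra h2
  push_neg at h2
  obtain ⟨u, hu, hcard⟩ := Finset.exists_subset_card_eq (show 3 ≤ t.card by omega)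
  exact h u ⟨ht.subset (Finset.coe_subset.mpr hu), hcard⟩

theorem subst_compl_no_large_clique_or_stable {V : Type*} [Fintype V]
    (T : SimpleGraph V) (m s : ℕ) (hm : Fintype.card V = m)
    (htriangle : T.CliqueFree 3)
    (hstable : ∀ t : Finset V, Tᶜ.IsClique (↑t : Set V) → t.card ≤ s) :
    Fintype.card (V × V) = m ^ 2 ∧
    ∀ c : Finset (V × V),
      ((substComplAll T).IsClique (↑c : Set (V × V)) ∨
        (substComplAll T)ᶜ.IsClique (↑c : Set (V × V))) → c.card ≤ 2 * s := by
  classical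
  refine ⟨by simp [Fintype.card_prod, hm, sq], ?_⟩
  intro c hc
  set I : Finset V := c.image Prod.fst with hI
  have hsum : c.card = ∑ u ∈ I, (c.filter (fun p => p.1 = u)).card :=
    Finset.card_eq_sum_card_fiberwise (fun p hp => Finset.mem_image_of_mem _ hp)
  -- the snd-image of each fiber has the same cardinality
  have hfibcard : ∀ u : V, (c.filter (fun p => p.1 = u)).card =
      ((c.filter (fun p => p.1 = u)).image Prod.snd).card := by
    intro u
    rw [Finset.card_image_of_injOn]
    intro p hp q hq hpq
    simp only [Finset.mem_coe, Finset.mem_filter] at hp hq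
    exact Prod.ext (hp.2.trans hq.2.symm) hpq
  rcases hc with hcl | hcl
  · -- clique case
    have hIcl : T.IsClique (↑I : Set V) := by
      intro u hu v hv huv
      rw [Finset.mem_coe, hI, Finset.mem_image] at hu hv
      obtain ⟨p, hp, rfl⟩ := hu
      obtain ⟨q, hq, rfl⟩ := hv
      have := hcl hp hq (fun h => huv (by rw [h]))
      rcases this with ⟨h1, _⟩ | ⟨_, h2⟩
      · exact absurd h1 huv
      · exact h2
    have hI2 : I.card ≤ 2 := clique_card_le_two_of_triangleFree htriangle hIcl
    have hfib : ∀ u ∈ I, (c.filter (fun p => p.1 = u)).card ≤ s := by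
      intro u _
      rw [hfibcard u]
      apply hstable
      intro a ha b hb hab
      simp only [Finset.coe_image, Set.mem_image, Finset.mem_coe,
        Finset.mem_filter] at ha hb
      obtain ⟨p, ⟨hp, hp1⟩, rfl⟩ := ha
      obtain ⟨q, ⟨hq, hq1⟩, rfl⟩ := hb
      have hne : p ≠ q := fun h => hab (by rw [h])
      have := hcl hp hq hne
      rcases this with ⟨_, _, h3⟩ | ⟨h1, _⟩
      · exact ⟨hab, h3⟩
      · exact absurd (hp1.trans hq1.symm) h1
    calc c.card = ∑ u ∈ I, (c.filter (fun p => p.1 = u)).card := hsum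
      _ ≤ I.card * s := Finset.sum_le_card_nsmul _ _ s hfib
      _ ≤ 2 * s := Nat.mul_le_mul_right s hI2
  · -- stable case
    have hIcl : Tᶜ.IsClique (↑I : Set V) := by
      intro u hu v hv huv
      rw [Finset.mem_coe, hI, Finset.mem_image] at hu hv
      obtain ⟨p, hp, rfl⟩ := hu
      obtain ⟨q, hq, rfl⟩ := hv
      have := hcl hp hq (fun h => huv (by rw [h]))
      rw [compl_adj] at this ⊢
      refine ⟨huv, fun hadj => this.2 (Or.inr ⟨huv, hadj⟩)⟩
    have hIs : I.card ≤ s := hstable I hIcl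
    have hfib : ∀ u ∈ I, (c.filter (fun p => p.1 = u)).card ≤ 2 := by
      intro u _
      rw [hfibcard u]
      apply clique_card_le_two_of_triangleFree htriangle
      intro a ha b hb hab
      simp only [Finset.coe_image, Set.mem_image, Finset.mem_coe,
        Finset.mem_filter] at ha hb
      obtain ⟨p, ⟨hp, hp1⟩, rfl⟩ := ha
      obtain ⟨q, ⟨hq, hq1⟩, rfl⟩ := hb
      have hne : p ≠ q := fun h => hab (by rw [h])
      have := hcl hp hq hne
      rw [compl_adj] at this
      by_contra hnadj
      exact this.2 (Or.inl ⟨hp1.trans hq1.symm, hab, hnadj⟩)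
    calc c.card = ∑ u ∈ I, (c.filter (fun p => p.1 = u)).card := hsum
      _ ≤ I.card * 2 := Finset.sum_le_card_nsmul _ _ 2 hfib
      _ = 2 * I.card := Nat.mul_comm _ _
      _ ≤ 2 * s := Nat.mul_le_mul_left 2 hIs
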